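/- Let X be a complete convex pointed metric space, n ∈ ℕ, X_n the closed ball of radius n about the base point e, and h(p) = min(ρ(p,e), n). Then for f ∈ Lip_0(X) with L(f) ≤ 1: f vanishes on X_n if and only if L(f + h) ≤ 1 and L(f − h) ≤ 1. -/

import Mathlib

open Filter Topology

/-- Key lemma: in a complete Menger-convex metric space, for `0 ≤ t ≤ dist e q` there is a
point `r` with `dist e r = t` and `dist r q = dist e q - t`. -/
lemma stmt17_key {X : Type*} [MetricSpace X] [CompleteSpace X] (e : X)
    (hconv : ∀ p q : X, p ≠ q → ∃ r : X, r ≠ p ∧ r ≠ q ∧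
      dist p q = dist p r + dist r q)
    (q : X) (t : ℝ) (ht0 : 0 ≤ t) (ht : t ≤ dist e q) :
    ∃ r : X, dist e r = t ∧ dist r q = dist e q - t := by
  set D := dist e q with hD
  set S : X × X → Prop := fun p => dist e p.1 ≤ t ∧ t ≤ dist e p.2 ∧
    dist e p.1 + dist p.1 p.2 + dist p.2 q = D with hSdef
  set rel : X × X → X × X → Prop := fun p p' =>
    dist p.1 p'.1 + dist p'.1 p'.2 + dist p'.2 p.2 = dist p.1 p.2 with hreldef
  have hrefl : ∀ p, rel p p := by
    intro p; simp [hreldef]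
  have htrans : ∀ p p' p'', rel p p' → rel p' p'' → rel p p'' := by
    intro a b c h1 h2
    simp only [hreldef] at h1 h2 ⊢
    have t1 := dist_triangle a.1 b.1 c.1
    have t2 := dist_triangle c.2 b.2 a.2
    have t3 := dist_triangle a.1 c.1 a.2
    have t4 := dist_triangle c.1 c.2 a.2
    linarith
  have hext : ∀ p p', S p → rel p p' →
      dist e p'.1 = dist e p.1 + dist p.1 p'.1 ∧
      dist p'.2 q = dist p.2 q + dist p'.2 p.2 := by
    intro a b hS hr
    obtain ⟨h1, h2, h3⟩ := hS
    simp only [hreldef] at hr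
    constructor
    · have u1 := dist_triangle e a.1 b.1
      have u2 : D ≤ dist e b.1 + dist b.1 q := hD ▸ dist_triangle e b.1 q
      have u3 := dist_triangle b.1 b.2 q
      have u4 := dist_triangle b.2 a.2 q
      linarith
    · have v1 := dist_triangle b.2 a.2 q
      have v2 : D ≤ dist e b.2 + dist b.2 q := hD ▸ dist_triangle e b.2 q
      have v3 := dist_triangle e a.1 b.2
      have v4 := dist_triangle a.1 b.1 b.2
      linarith
  set len : X × X → ℝ := fun p => dist p.1 p.2 with hlendef
  set m : X × X → ℝ := fun p => sInf {d | ∃ p', S p' ∧ rel p p' ∧ d = len p'} with hmdef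
  have hmle : ∀ p p', S p' → rel p p' → m p ≤ len p' := by
    intro p p' hp' hr
    exact csInf_le ⟨0, by rintro d ⟨p'', _, _, rfl⟩; exact dist_nonneg⟩ ⟨p', hp', hr, rfl⟩
  have hstep : ∀ p, S p → ∀ ε : ℝ, 0 < ε → ∃ p', S p' ∧ rel p p' ∧ len p' < m p + ε := by
    intro p hp ε hε
    obtain ⟨d, ⟨p', hp', hr, hd⟩, hlt⟩ :=
      Real.lt_sInf_add_pos (s := {d | ∃ p', S p' ∧ rel p p' ∧ d = len p'})
        ⟨len p, p, hp, hrefl p, rfl⟩ hε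
    exact ⟨p', hp', hr, hd ▸ hlt⟩
  have base : S (e, q) := by
    refine ⟨by simpa using ht0, by simpa using ht, by simp [hD]⟩
  -- build the greedy sequence
  choose g hg1 hg2 hg3 using fun (p : {p : X × X // S p}) (k : ℕ) =>
    hstep p.1 p.2 ((1/2 : ℝ)^k) (by positivity)
  set u : ℕ → {p : X × X // S p} :=
    fun k => Nat.rec ⟨(e, q), base⟩ (fun k pk => ⟨g pk k, hg1 pk k⟩) k with hudef
  have hu0 : ∀ k, rel (u k).1 (u (k+1)).1 := fun k => hg2 (u k) k
  have hulen : ∀ k, len (u (k+1)).1 < m (u k).1 + (1/2:ℝ)^k := fun k => hg3 (u k) k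
  have hchain : ∀ k j, k ≤ j → rel (u k).1 (u j).1 := by
    intro k j hkj
    induction j with
    | zero => obtain rfl := Nat.le_zero.mp hkj; exact hrefl _
    | succ j ih =>
      rcases Nat.lt_or_ge k (j+1) with h | h
      · exact htrans _ _ _ (ih (Nat.lt_succ_iff.mp h)) (hu0 j)
      · obtain rfl : k = j + 1 := le_antisymm hkj h
        exact hrefl _
  set a : ℕ → X := fun k => (u k).1.1 with hadef
  set b : ℕ → X := fun k => (u k).1.2 with hbdef
  have hAB : ∀ k j, k ≤ j → dist e (a j) = dist e (a k) + dist (a k) (a j) ∧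
      dist (b j) q = dist (b k) q + dist (b j) (b k) :=
    fun k j hkj => hext _ _ (u k).2 (hchain k j hkj)
  -- Cauchy sequences
  have hAmono : Monotone (fun k => dist e (a k)) := by
    intro k j hkj
    have := (hAB k j hkj).1
    have := dist_nonneg (x := a k) (y := a j)
    linarith
  have hAbdd : ∀ k, dist e (a k) ≤ t := fun k => (u k).2.1
  have hBmono : Monotone (fun k => dist (b k) q) := by
    intro k j hkj
    have := (hAB k j hkj).2
    have := dist_nonneg (x := b j) (y := b k)
    linarith
  have hBbdd : ∀ k, dist (b k) q ≤ D := by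
    intro k
    have h3 := (u k).2.2.2
    have := dist_nonneg (x := e) (y := a k)
    have := dist_nonneg (x := a k) (y := b k)
    linarith
  have hAconv : ∃ α, Tendsto (fun k => dist e (a k)) atTop (𝓝 α) :=
    ⟨_, tendsto_atTop_ciSup hAmono ⟨t, by rintro x ⟨k, rfl⟩; exact hAbdd k⟩⟩
  have hBconv : ∃ β, Tendsto (fun k => dist (b k) q) atTop (𝓝 β) :=
    ⟨_, tendsto_atTop_ciSup hBmono ⟨D, by rintro x ⟨k, rfl⟩; exact hBbdd k⟩⟩
  obtain ⟨α, hα⟩ := hAconv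
  obtain ⟨β, hβ⟩ := hBconv
  have hdista : ∀ k j, dist (a k) (a j) = dist (dist e (a k)) (dist e (a j)) := by
    intro k j
    rcases le_total k j with h | h
    · have h1 := (hAB k j h).1
      rw [Real.dist_eq, h1, abs_sub_comm]
      simp [abs_of_nonneg dist_nonneg]
    · have h1 := (hAB j k h).1
      rw [Real.dist_eq, h1, dist_comm (a k) (a j)]
      simp [abs_of_nonneg dist_nonneg]
  have hdistb : ∀ k j, dist (b k) (b j) = dist (dist (b k) q) (dist (b j) q) := by
    intro k j
    rcases le_total k j with h | h
    · have h1 := (hAB k j h).2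
      rw [Real.dist_eq, h1, abs_sub_comm, dist_comm (b k) (b j)]
      simp [abs_of_nonneg dist_nonneg]
    · have h1 := (hAB j k h).2
      rw [Real.dist_eq, h1]
      simp [abs_of_nonneg dist_nonneg]
  have hca : CauchySeq a := by
    have hA : CauchySeq (fun k => dist e (a k)) := hα.cauchySeq
    rw [Metric.cauchySeq_iff] at hA ⊢
    intro ε hε
    obtain ⟨N, hN⟩ := hA ε hε
    exact ⟨N, fun mm hm nn hn => by rw [hdista]; exact hN mm hm nn hn⟩
  have hcb : CauchySeq b := by
    have hB : CauchySeq (fun k => dist (b k) q) := hβ.cauchySeq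
    rw [Metric.cauchySeq_iff] at hB ⊢
    intro ε hε
    obtain ⟨N, hN⟩ := hB ε hε
    exact ⟨N, fun mm hm nn hn => by rw [hdistb]; exact hN mm hm nn hn⟩
  obtain ⟨as, has⟩ := cauchySeq_tendsto_of_complete hca
  obtain ⟨bs, hbs⟩ := cauchySeq_tendsto_of_complete hcb
  have hta : Tendsto (fun k => dist e (a k)) atTop (𝓝 (dist e as)) :=
    tendsto_const_nhds.dist has
  have htb : Tendsto (fun k => dist e (b k)) atTop (𝓝 (dist e bs)) :=
    tendsto_const_nhds.dist hbs
  have htab : Tendsto (fun k => dist (a k) (b k)) atTop (𝓝 (dist as bs)) :=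
    has.dist hbs
  have htbq : Tendsto (fun k => dist (b k) q) atTop (𝓝 (dist bs q)) :=
    hbs.dist tendsto_const_nhds
  -- S (as, bs)
  have hS1 : dist e as ≤ t := le_of_tendsto' hta hAbdd
  have hS2 : t ≤ dist e bs := ge_of_tendsto' htb (fun k => (u k).2.2.1)
  have hS3 : dist e as + dist as bs + dist bs q = D := by
    refine tendsto_nhds_unique ((hta.add htab).add htbq) ?_
    have : (fun k => dist e (a k) + dist (a k) (b k) + dist (b k) q) = fun _ => D :=
      funext fun k => (u k).2.2.2
    rw [this]
    exact tendsto_const_nhds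
  have hSstar : S (as, bs) := ⟨hS1, hS2, hS3⟩
  have hrelstar : ∀ k, rel (u k).1 (as, bs) := by
    intro k
    have h1 : Tendsto (fun j => dist (a k) (a j) + dist (a j) (b j) + dist (b j) (b k))
        atTop (𝓝 (dist (a k) as + dist as bs + dist bs (b k))) :=
      ((tendsto_const_nhds.dist has).add htab).add (hbs.dist tendsto_const_nhds)
    have h2 : (fun j => dist (a k) (a j) + dist (a j) (b j) + dist (b j) (b k)) =ᶠ[atTop]
        (fun _ => dist (a k) (b k)) := by
      filter_upwards [eventually_ge_atTop k] with j hj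
      exact hchain k j hj
    exact tendsto_nhds_unique (h1.congr' h2) tendsto_const_nhds
  by_cases hab : as = bs
  · refine ⟨as, ?_, ?_⟩
    · exact le_antisymm hS1 (hab ▸ hS2)
    · have he : dist e as = t := le_antisymm hS1 (hab ▸ hS2)
      have : dist as bs = 0 := by rw [hab, dist_self]
      have hq : dist bs q = D - t := by rw [← he]; linarith
      rw [hab, hq]
  · exfalso
    obtain ⟨c, hc1, hc2, hcd⟩ := hconv as bs hab
    have hrelc1 : rel (as, bs) (c, bs) := by
      simp only [hreldef]; simp [dist_self]; linarith
    have hrelc2 : rel (as, bs) (as, c) := by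
      simp only [hreldef]; simp [dist_self]; linarith
    have hkey : ∃ p', S p' ∧ rel (as, bs) p' ∧ len p' < len (as, bs) := by
      rcases le_or_gt (dist e c) t with hle | hlt
      · refine ⟨(c, bs), ⟨hle, hS2, ?_⟩, hrelc1, ?_⟩
        · have hx := (hext _ _ hSstar hrelc1).1
          simp only at hx ⊢
          linarith
        · simp only [hlendef]
          have : 0 < dist as c := dist_pos.mpr (fun h => hc1 h.symm)
          linarith
      · refine ⟨(as, c), ⟨hS1, le_of_lt hlt, ?_⟩, hrelc2, ?_⟩
        · have hx := (hext _ _ hSstar hrelc2).2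
          simp only at hx ⊢
          linarith
        · simp only [hlendef]
          have : 0 < dist c bs := dist_pos.mpr hc2
          linarith
    obtain ⟨p', hSp', hrelp', hlenp'⟩ := hkey
    have hge : ∀ k, m (u k).1 ≤ len p' :=
      fun k => hmle _ _ hSp' (htrans _ _ _ (hrelstar k) hrelp')
    have hineq : ∀ k, len (u (k+1)).1 ≤ len p' + (1/2:ℝ)^k := by
      intro k
      have := hulen k
      have := hge k
      linarith
    have hlimL : Tendsto (fun k => len (u (k+1)).1) atTop (𝓝 (dist as bs)) := by
      have : Tendsto (fun k => dist (a (k+1)) (b (k+1))) atTop (𝓝 (dist as bs)) :=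
        htab.comp (tendsto_add_atTop_nat 1)
      exact this
    have hlimR : Tendsto (fun k => len p' + (1/2:ℝ)^k) atTop (𝓝 (len p' + 0)) :=
      tendsto_const_nhds.add
        (tendsto_pow_atTop_nhds_zero_of_lt_one (by norm_num) (by norm_num))
    have : dist as bs ≤ len p' + 0 := le_of_tendsto_of_tendsto' hlimL hlimR hineq
    simp only [hlendef] at hlenp'
    linarith

/-- with `X` complete and convex with base point `e`, `X_n` the closed ball
of radius `n` about `e`, `h p = min (dist p e) n`, and `f ∈ Lip_0(X)` with `L(f) ≤ 1`:
`f` vanishes on `X_n` iff `L(f + h) ≤ 1` and `L(f - h) ≤ 1`. -/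
theorem stmt17 {X : Type*} [MetricSpace X] [CompleteSpace X] (e : X)
    (hconv : ∀ p q : X, p ≠ q → ∃ r : X, r ≠ p ∧ r ≠ q ∧
      dist p q = dist p r + dist r q)
    (n : ℕ) (f : X → ℝ) (hf : LipschitzWith 1 f) (hfe : f e = 0) :
    (∀ p : X, dist p e ≤ n → f p = 0) ↔
      (LipschitzWith 1 (fun p => f p + min (dist p e) n) ∧
       LipschitzWith 1 (fun p => f p - min (dist p e) n)) := by
  have hn0 : (0:ℝ) ≤ n := Nat.cast_nonneg n
  constructor
  · intro hvan
    -- outside bound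
    have hout : ∀ p : X, (n:ℝ) ≤ dist p e → |f p| ≤ dist p e - n := by
      intro p hp
      obtain ⟨r, hr1, hr2⟩ := stmt17_key e hconv p n hn0 (by rwa [dist_comm] at hp)
      have hfr : f r = 0 := hvan r (by rw [dist_comm]; exact le_of_eq hr1)
      have := hf.dist_le_mul p r
      rw [Real.dist_eq, hfr, sub_zero] at this
      calc |f p| ≤ 1 * dist p r := by simpa using this
        _ = dist p e - n := by rw [one_mul, dist_comm p r, hr2, dist_comm]
    -- key pointwise bound, for ordered pair
    have haux : ∀ s : ℝ, |s| = 1 → ∀ p q : X, dist p e ≤ dist q e →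
        |(f p + s * min (dist p e) n) - (f q + s * min (dist q e) n)| ≤ dist p q := by
      intro s hs p q hle
      rcases le_or_gt (dist q e) n with hq | hq
      · -- both inside
        have hp' : dist p e ≤ n := le_trans hle hq
        rw [hvan p hp', hvan q hq, min_eq_left hp', min_eq_left hq]
        have h1 : |dist p e - dist q e| ≤ dist p q := abs_dist_sub_le p q e
        calc |(0 + s * dist p e) - (0 + s * dist q e)| = |s| * |dist p e - dist q e| := by
              rw [← abs_mul]; ring_nf
          _ ≤ dist p q := by rw [hs, one_mul]; exact h1
      · rcases le_or_gt (dist p e) n with hp | hp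
        · -- mixed
          have hfq := hout q (le_of_lt hq)
          rw [hvan p hp, min_eq_left hp, min_eq_right (le_of_lt hq)]
          have htri : dist q e ≤ dist q p + dist p e := dist_triangle q p e
          have h1 : |(0 + s * dist p e) - (f q + s * n)| ≤ |s * (dist p e - n)| + |f q| := by
            have : (0 + s * dist p e) - (f q + s * n) = s * (dist p e - n) + (- f q) := by ring
            rw [this]
            calc |s * (dist p e - n) + (- f q)| ≤ |s * (dist p e - n)| + |(- f q)| := abs_add_le _ _
              _ = |s * (dist p e - n)| + |f q| := by rw [abs_neg]
          have h2 : |s * (dist p e - n)| = n - dist p e := by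
            rw [abs_mul, hs, one_mul, abs_of_nonpos (by linarith)]; ring
          have : dist q p = dist p q := dist_comm q p
          calc |(0 + s * dist p e) - (f q + s * n)| ≤ (n - dist p e) + |f q| := by
                rw [← h2]; exact h1
            _ ≤ (n - dist p e) + (dist q e - n) := by linarith
            _ ≤ dist p q := by linarith
        · -- both outside
          rw [min_eq_right (le_of_lt hq), min_eq_right (le_of_lt hp)]
          have := hf.dist_le_mul p q
          simp only [Real.dist_eq, NNReal.coe_one, one_mul] at this
          have heq : (f p + s * (n:ℝ)) - (f q + s * (n:ℝ)) = f p - f q := by ring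
          rw [heq]
          exact this
    have hlip : ∀ s : ℝ, |s| = 1 →
        LipschitzWith 1 (fun p => f p + s * min (dist p e) n) := by
      intro s hs
      apply LipschitzWith.of_dist_le_mul
      intro p q
      rw [Real.dist_eq, NNReal.coe_one, one_mul]
      rcases le_total (dist p e) (dist q e) with h | h
      · exact haux s hs p q h
      · rw [abs_sub_comm, dist_comm p q]
        exact haux s hs q p h
    constructor
    · have := hlip 1 (by norm_num)
      simpa using this
    · have := hlip (-1) (by norm_num)
      have heq : (fun p => f p + (-1) * min (dist p e) n) =
          (fun p => f p - min (dist p e) n) := by funext p; ring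
      rwa [heq] at this
  · rintro ⟨h1, h2⟩ p hp
    have he1 : f e + min (dist e e) (n:ℝ) = 0 := by
      rw [hfe, dist_self, min_eq_left hn0, add_zero]
    have he2 : f e - min (dist e e) (n:ℝ) = 0 := by
      rw [hfe, dist_self, min_eq_left hn0, sub_zero]
    have hb1 := h1.dist_le_mul p e
    have hb2 := h2.dist_le_mul p e
    simp only [Real.dist_eq, NNReal.coe_one, one_mul] at hb1 hb2
    rw [he1] at hb1
    rw [he2] at hb2
    rw [min_eq_left hp, sub_zero] at hb1 hb2
    have hd : 0 ≤ dist p e := dist_nonneg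
    have hu1 : f p + dist p e ≤ dist p e := (abs_le.mp hb1).2
    have hu2 : -(dist p e) ≤ f p - dist p e := (abs_le.mp hb2).1
    linarith
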